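/- Let q > 0 be a real number with q ≠ 1. Then for all real numbers a, b ≥ 0 and c, d > 0, equality (a+b)^q / (c+d)^{q-1} = a^q / c^{q-1} + b^q / d^{q-1} holds if and only if a·d = b·c. -/

import Mathlib

theorem superposition_inequality_equality_iff (q : ℝ) (hq0 : 0 < q) (hq1 : q ≠ 1)
    (a b c d : ℝ) (ha : 0 ≤ a) (hb : 0 ≤ b) (hc : 0 < c) (hd : 0 < d) :
    (a + b) ^ q / (c + d) ^ (q - 1) = a ^ q / c ^ (q - 1) + b ^ q / d ^ (q - 1) ↔
      a * d = b * c := by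
  have hcd : (0:ℝ) < c + d := by linarith
  set x := a / c with hxdef
  set y := b / d with hydef
  have hx : 0 ≤ x := div_nonneg ha hc.le
  have hy : 0 ≤ y := div_nonneg hb hd.le
  have hcq : (0:ℝ) < c ^ q := Real.rpow_pos_of_pos hc q
  have hdq : (0:ℝ) < d ^ q := Real.rpow_pos_of_pos hd q
  have hcdq : (0:ℝ) < (c + d) ^ q := Real.rpow_pos_of_pos hcd q
  have key : ∀ u v : ℝ, 0 ≤ u → 0 < v → u ^ q / v ^ (q - 1) = v * (u / v) ^ q := by
    intro u v hu hv
    rw [Real.div_rpow hu hv.le, Real.rpow_sub hv, Real.rpow_one]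
    have hvq : (0:ℝ) < v ^ q := Real.rpow_pos_of_pos hv q
    field_simp
  have h1 : a ^ q / c ^ (q - 1) = c * x ^ q := key a c ha hc
  have h2 : b ^ q / d ^ (q - 1) = d * y ^ q := key b d hb hd
  have h3 : (a + b) ^ q / (c + d) ^ (q - 1)
      = (c + d) * ((c / (c + d)) * x + (d / (c + d)) * y) ^ q := by
    rw [key (a + b) (c + d) (by linarith) hcd]
    congr 2
    rw [hxdef, hydef]
    field_simp
  have hxy_iff : x = y ↔ a * d = b * c := by
    rw [hxdef, hydef, div_eq_div_iff hc.ne' hd.ne']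
  rw [h1, h2, h3]
  constructor
  · intro heq
    by_contra hne
    have hxy : x ≠ y := fun h => hne (hxy_iff.1 h)
    have hwa : (0:ℝ) < c / (c + d) := by positivity
    have hwb : (0:ℝ) < d / (c + d) := by positivity
    have hwab : c / (c + d) + d / (c + d) = 1 := by field_simp
    rcases lt_or_gt_of_ne (fun h : q = 1 => hq1 h) with hqlt | hqgt
    · have := (Real.strictConcaveOn_rpow hq0 hqlt).2 hx hy hxy hwa hwb hwab
      -- c/(c+d) * x^q + d/(c+d) * y^q < (...)^q
      have h4 : c * x ^ q + d * y ^ q < (c + d) * ((c / (c + d)) * x + (d / (c + d)) * y) ^ q := by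
        have := mul_lt_mul_of_pos_left this hcd
        calc c * x ^ q + d * y ^ q
            = (c + d) * (c / (c + d) * x ^ q + d / (c + d) * y ^ q) := by field_simp
          _ < _ := this
      linarith [heq]
    · have := (strictConvexOn_rpow hqgt).2 hx hy hxy hwa hwb hwab
      have h4 : (c + d) * ((c / (c + d)) * x + (d / (c + d)) * y) ^ q < c * x ^ q + d * y ^ q := by
        have := mul_lt_mul_of_pos_left this hcd
        calc (c + d) * ((c / (c + d)) * x + (d / (c + d)) * y) ^ q
            < (c + d) * (c / (c + d) * x ^ q + d / (c + d) * y ^ q) := this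
          _ = c * x ^ q + d * y ^ q := by field_simp
      linarith [heq]
  · intro h
    have hxy : x = y := hxy_iff.2 h
    rw [hxy]
    have : (c / (c + d)) * y + (d / (c + d)) * y = y := by field_simp
    rw [this]; ring
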